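/- In any execution trace of the onboarding protocol, if a registration-success event for a device occurs at time point j, then there exists an earlier time point i < j at which a validation event (checking the device's signed token and nonce) occurred for that same device. -/

import Mathlib

/-- Protocol events: `validate d t n` checks the device `d`'s signed token `t` and
nonce `n`; `registrationSuccess d` signals successful registration of device `d`. -/
inductive Event where
  | validate (deviceID token nonce : ℕ)
  | registrationSuccess (deviceID : ℕ)
deriving DecidableEq

/-- Traces generated by the protocol's transition rules: a trace is extended one event
at a time, and a `registrationSuccess d` event may only be emitted in a state reachable
after some `validate d t n` event already occurred in the trace. -/
inductive ValidTrace : List Event → Prop where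
  | nil : ValidTrace []
  | validate (tr : List Event) (d t n : ℕ) (h : ValidTrace tr) :
      ValidTrace (tr ++ [Event.validate d t n])
  | registrationSuccess (tr : List Event) (d : ℕ) (h : ValidTrace tr)
      (hguard : ∃ t n, Event.validate d t n ∈ tr) :
      ValidTrace (tr ++ [Event.registrationSuccess d])

/-- **Authentication.** In any execution trace of the onboarding protocol, if a
registration-success event for a device occurs at time point `j`, then there is an
earlier time point `i < j` at which a validation event (checking the device's signed
token and nonce) occurred for that same device. -/
theorem registration_requires_prior_validation
    (tr : List Event) (htr : ValidTrace tr) (d : ℕ) (j : ℕ)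
    (hj : tr[j]? = some (Event.registrationSuccess d)) :
    ∃ i t n, i < j ∧ tr[i]? = some (Event.validate d t n) := by
  induction htr generalizing j with
  | nil => simp at hj
  | validate tr d' t n h ih =>
    rcases lt_or_ge j tr.length with hlt | hge
    · rw [List.getElem?_append_left hlt] at hj
      obtain ⟨i, t', n', hi, hg⟩ := ih j hj
      exact ⟨i, t', n', hi, by rw [List.getElem?_append_left (hi.trans hlt)]; exact hg⟩
    · rw [List.getElem?_append_right hge] at hj
      rcases Nat.eq_zero_or_pos (j - tr.length) with h0 | hpos
      · rw [h0] at hj; simp at hj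
      · rw [List.getElem?_eq_none (by simp only [List.length_singleton]; exact hpos)] at hj
        exact absurd hj (by simp)
  | registrationSuccess tr d' h hguard ih =>
    rcases lt_or_ge j tr.length with hlt | hge
    · rw [List.getElem?_append_left hlt] at hj
      obtain ⟨i, t', n', hi, hg⟩ := ih j hj
      exact ⟨i, t', n', hi, by rw [List.getElem?_append_left (hi.trans hlt)]; exact hg⟩
    · rw [List.getElem?_append_right hge] at hj
      have hd : d' = d := by
        rcases Nat.eq_zero_or_pos (j - tr.length) with h0 | hpos
        · rw [h0] at hj; simpa using hj
        · rw [List.getElem?_eq_none (by simp only [List.length_singleton]; exact hpos)] at hj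
          exact absurd hj (by simp)
      subst hd
      obtain ⟨t, n, hm⟩ := hguard
      obtain ⟨i, hi⟩ := List.getElem?_of_mem hm
      have hil : i < tr.length := (List.getElem?_eq_some_iff.1 hi).1
      exact ⟨i, t, n, lt_of_lt_of_le hil hge,
        by rw [List.getElem?_append_left hil]; exact hi⟩
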